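/- Let f : ℝ → ℝ be nonnegative and measurable, and suppose f is nonincreasing on [c, ∞) for some c ∈ ℝ. Then for every t > 0 and every x > c, the convolution satisfies f∗Θ_t(x) ≥ (f(x)/√π) · ∫_0^{(x−c)/(2√t)} e^{−y²} dy. -/
import Mathlib

open MeasureTheory Real Set
open scoped ENNReal

/-- The Gauss–Weierstrass heat kernel on the real line. -/
noncomputable def heatKernel (t x : ℝ) : ℝ :=
  Real.exp (-x ^ 2 / (4 * t)) / (2 * Real.sqrt (Real.pi * t))

theorem convolution_heatKernel_lower_bound (f : ℝ → ℝ) (hf : Measurable f)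
    (hf0 : ∀ x, 0 ≤ f x) (c : ℝ) (hmono : AntitoneOn f (Ici c))
    (t : ℝ) (ht : 0 < t) (x : ℝ) (hx : c < x) :
    ENNReal.ofReal
        ((f x / Real.sqrt Real.pi) * ∫ y in (0)..((x - c) / (2 * Real.sqrt t)),
          Real.exp (-y ^ 2)) ≤
      ∫⁻ y : ℝ, ENNReal.ofReal (f (x - y) * heatKernel t y) := by
  set s : ℝ := 2 * Real.sqrt t with hs
  have hst : 0 < Real.sqrt t := Real.sqrt_pos.2 ht
  have hs0 : 0 < s := by positivity
  set d : ℝ := x - c with hd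
  have hd0 : 0 < d := by simp [hd]; linarith
  have hπt : 0 < Real.sqrt (Real.pi * t) := Real.sqrt_pos.2 (by positivity)
  have hkcont : Continuous fun y : ℝ => heatKernel t y := by
    unfold heatKernel
    exact (Real.continuous_exp.comp (by continuity)).div_const _
  have hknn : ∀ y, 0 ≤ heatKernel t y := fun y => by
    unfold heatKernel; positivity
  -- change of variables
  have hsq : ∀ y : ℝ, (y / s) ^ 2 = y ^ 2 / (4 * t) := by
    intro y
    rw [div_pow, hs, mul_pow, Real.sq_sqrt ht.le]
    norm_num
  have hsub : (∫ y in (0)..d, Real.exp (-(y / s) ^ 2)) =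
      s • ∫ u in (0 / s)..(d / s), Real.exp (-u ^ 2) :=
    intervalIntegral.integral_comp_div (fun u => Real.exp (-u ^ 2)) hs0.ne'
  have key : (f x / Real.sqrt Real.pi) * ∫ u in (0)..(d / s), Real.exp (-u ^ 2) =
      f x * ∫ y in (0)..d, heatKernel t y := by
    have h1 : (∫ y in (0)..d, heatKernel t y) =
        (2 * Real.sqrt (Real.pi * t))⁻¹ * ∫ y in (0)..d, Real.exp (-(y / s) ^ 2) := by
      rw [← intervalIntegral.integral_const_mul]
      refine intervalIntegral.integral_congr fun y _ => ?_
      unfold heatKernel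
      rw [hsq, neg_div]
      ring
    rw [h1, hsub]
    rw [zero_div]
    have : Real.sqrt (Real.pi * t) = Real.sqrt Real.pi * Real.sqrt t :=
      Real.sqrt_mul Real.pi_pos.le t
    rw [this]
    have hπ : 0 < Real.sqrt Real.pi := Real.sqrt_pos.2 Real.pi_pos
    field_simp [hs]
    ring
  rw [key]
  -- now compare with lintegral
  have hIoc : (∫ y in (0)..d, heatKernel t y) = ∫ y in Ioc 0 d, heatKernel t y := by
    rw [intervalIntegral.integral_of_le hd0.le]
  have hint : IntegrableOn (fun y => f x * heatKernel t y) (Ioc 0 d) := by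
    exact ((continuous_const.mul hkcont).integrableOn_Ioc)
  have heq : ENNReal.ofReal (f x * ∫ y in (0)..d, heatKernel t y) =
      ∫⁻ y in Ioc 0 d, ENNReal.ofReal (f x * heatKernel t y) := by
    rw [hIoc, ← MeasureTheory.integral_const_mul]
    exact ofReal_integral_eq_lintegral_ofReal hint
      (ae_of_all _ fun y => mul_nonneg (hf0 x) (hknn y))
  rw [heq]
  refine le_trans (lintegral_mono_ae ?_) (setLIntegral_le_lintegral _ _)
  rw [ae_restrict_iff' measurableSet_Ioc]
  refine ae_of_all _ fun y hy => ?_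
  refine ENNReal.ofReal_le_ofReal (mul_le_mul_of_nonneg_right ?_ (hknn y))
  refine hmono ?_ ?_ ?_
  · simp only [mem_Ici]; have := hy.2; simp [hd] at this ⊢; linarith
  · exact le_of_lt hx
  · linarith [hy.1]
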